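/- The comultiplication formula for nilpotent-at-a-vertex classes: in the twisted Ringel-Hall algebra H_k(Q) of a quiver Q over a finite field k with v^2 = #k, for a vertex i with g_i loops, δ([E_{i,l}]) = ∑_{m+n=l} v^{mn(-1-g_i)} [E_{i,m}] ⊗ [E_{i,n}], where δ([L]) = ∑_{M,N} v^{⟨dim M, dim N⟩} α_{M,N}^L (a_M a_N / a_L) [M] ⊗ [N] and a_M = #Aut(M). -/

import Mathlib

open Finset Module Classical

universe u

/-- A representation of the quiver with vertex set `I` and `c i j` arrows from `i` to `j`
(loops counted by `c i i`), over a field `k`. -/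
structure QRep (k : Type) [Field k] {I : Type} (c : I → I → ℕ) where
  V : I → Type
  [grp : ∀ i, AddCommGroup (V i)]
  [mod : ∀ i, Module k (V i)]
  [fd : ∀ i, FiniteDimensional k (V i)]
  x : ∀ i j, Fin (c i j) → (V i →ₗ[k] V j)

attribute [instance] QRep.grp QRep.mod QRep.fd

variable {k : Type} [Field k] [Fintype k] {I : Type} [Fintype I] [DecidableEq I] {c : I → I → ℕ}

/-- Isomorphism of representations. -/
def QRepIso (M N : QRep k c) : Prop :=
  ∃ e : ∀ i, M.V i ≃ₗ[k] N.V i, ∀ i j a m, e j (M.x i j a m) = N.x i j a (e i m)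

/-- A subrepresentation of `L`. -/
structure QSubRep (L : QRep k c) where
  W : ∀ i, Submodule k (L.V i)
  stable : ∀ i j a, ∀ w ∈ W i, L.x i j a w ∈ W j

/-- The subrepresentation as a representation. -/
def QSubRep.toRep {L : QRep k c} (X : QSubRep L) : QRep k c where
  V i := X.W i
  x i j a := (L.x i j a).restrict (X.stable i j a)

/-- The quotient representation `L/X`. -/
def QSubRep.quotRep {L : QRep k c} (X : QSubRep L) : QRep k c where
  V i := L.V i ⧸ X.W i
  x i j a := Submodule.mapQ (X.W i) (X.W j) (L.x i j a) (fun w hw => X.stable i j a w hw)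

/-- The dimension vector. -/
noncomputable def dimv (M : QRep k c) : I → ℕ := fun i => finrank k (M.V i)

/-- The Euler form `⟨α,β⟩ = ∑_i (1-g_i) d_i d_i' - ∑_{i≠j} c_{ij} d_i d_j'`. -/
def eulerF (c : I → I → ℕ) (d d' : I → ℕ) : ℤ :=
  ∑ i, (1 - (c i i : ℤ)) * d i * d' i
    - ∑ i, ∑ j, (if i = j then 0 else (c i j : ℤ)) * (d i) * (d' j)

/-- The Hall number `α_{M,N}^L = #{X ⊆ L : X ≅ N, L/X ≅ M}`. -/
noncomputable def hallNum (M N L : QRep k c) : ℕ :=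
  Nat.card {X : QSubRep L // QRepIso X.toRep N ∧ QRepIso X.quotRep M}

/-- The coefficient of `[L]` in the twisted Hall product `[M][N]`. -/
noncomputable def prodCoeff (v : ℝ) (M N L : QRep k c) : ℝ :=
  v ^ (eulerF c (dimv M) (dimv N)) * hallNum M N L

/-- The representation `E_{i,l}`: `k^l` at vertex `i`, zero elsewhere, all maps zero. -/
def ERep (i : I) (l : ℕ) : QRep k c where
  V j := Fin (if j = i then l else 0) → k
  x _ _ _ := 0

/-- Direct sum of representations. -/
def dsum (M N : QRep k c) : QRep k c where
  V i := M.V i × N.V i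
  x i j a := (M.x i j a).prodMap (N.x i j a)

/-- Isomorphism is an equivalence relation. -/
instance repSetoid (k : Type) [Field k] {I : Type} (c : I → I → ℕ) [Field k] : Setoid (QRep k c) :=
  ⟨QRepIso, by
    constructor
    · exact fun M => ⟨fun i => LinearEquiv.refl k (M.V i), fun _ _ _ _ => rfl⟩
    · rintro M N ⟨e, he⟩
      exact ⟨fun i => (e i).symm, by
        intro i j a m
        apply (e j).injective
        simp [he i j a ((e i).symm m)]⟩
    · rintro M N P ⟨e, he⟩ ⟨f, hf⟩
      exact ⟨fun i => (e i).trans (f i), by intro i j a m; simp [he, hf]⟩⟩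

/-- Isomorphism classes of representations. -/
def QRepCl (k : Type) [Field k] {I : Type} (c : I → I → ℕ) : Type 1 :=
  Quotient (repSetoid k c)

/-- The basis element `[M]` of the Hall algebra, as a coefficient function on
isomorphism classes. -/
noncomputable def hbasis (M : QRep k c) : QRepCl k c → ℝ :=
  fun L => if L = ⟦M⟧ then 1 else 0

/-- The twisted Hall multiplication, extended bilinearly to coefficient functions. -/
noncomputable def hmul (v : ℝ) (f g : QRepCl k c → ℝ) : QRepCl k c → ℝ :=
  fun L => ∑ᶠ p : QRepCl k c × QRepCl k c,
    f p.1 * g p.2 * prodCoeff v p.1.out p.2.out L.out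

/-- The zero representation. -/
def zeroRep : QRep k c where
  V _ := Fin 0 → k
  x _ _ _ := 0

/-- Powers in the Hall algebra. -/
noncomputable def hpow (v : ℝ) (f : QRepCl k c → ℝ) : ℕ → (QRepCl k c → ℝ)
  | 0 => hbasis zeroRep
  | n + 1 => hmul v f (hpow v f n)

/-- Balanced quantum integer. -/
noncomputable def qint (v : ℝ) (n : ℕ) : ℝ := (v ^ n - v⁻¹ ^ n) / (v - v⁻¹)

/-- Balanced quantum factorial. -/
noncomputable def qfact (v : ℝ) (l : ℕ) : ℝ := ∏ j ∈ Finset.range l, qint v (j + 1)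

/-- Order of the automorphism group of a representation. -/
noncomputable def autNum (M : QRep k c) : ℕ :=
  Nat.card {e : ∀ i, M.V i ≃ₗ[k] M.V i // ∀ i j a m, e j (M.x i j a m) = M.x i j a (e i m)}

/-- The coefficient of `[M] ⊗ [N]` in the Hall-algebra comultiplication `δ([L])`,
namely `v^{⟨dim M, dim N⟩} α_{M,N}^L a_M a_N / a_L`. -/
noncomputable def deltaCoeff (v : ℝ) (M N L : QRep k c) : ℝ :=
  v ^ (eulerF c (dimv M) (dimv N)) * hallNum M N L * autNum M * autNum N / autNum L


section Aux

open Module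

lemma qiso_symm {M N : QRep k c} (h : QRepIso M N) : QRepIso N M :=
  (repSetoid k c).iseqv.symm h

lemma qiso_trans {M N P : QRep k c} (h1 : QRepIso M N) (h2 : QRepIso N P) : QRepIso M P :=
  (repSetoid k c).iseqv.trans h1 h2

lemma finrank_eq_of_qiso {M N : QRep k c} (h : QRepIso M N) (j : I) :
    finrank k (M.V j) = finrank k (N.V j) := by
  obtain ⟨e, -⟩ := h
  exact (e j).finrank_eq

lemma qiso_of_zero {M N : QRep k c} (hM : ∀ a b e, M.x a b e = 0)
    (hN : ∀ a b e, N.x a b e = 0)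
    (h : ∀ j, finrank k (M.V j) = finrank k (N.V j)) : QRepIso M N := by
  refine ⟨fun j => (FiniteDimensional.nonempty_linearEquiv_of_finrank_eq (h j)).some, ?_⟩
  intro a b e m
  rw [hM, hN]
  simp

lemma ERep_x (i : I) (l : ℕ) : ∀ a b e, (ERep i l : QRep k c).x a b e = 0 :=
  fun _ _ _ => rfl

lemma finrank_ERep (i : I) (l : ℕ) (j : I) :
    finrank k ((ERep i l : QRep k c).V j) = if j = i then l else 0 := by
  show finrank k (Fin (if j = i then l else 0) → k) = _
  simp [Module.finrank_fintype_fun_eq_card]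

lemma dimv_ERep_cast (i : I) (d : ℕ) (j : I) :
    ((dimv (ERep i d : QRep k c) j : ℕ) : ℤ) = if j = i then (d : ℤ) else 0 := by
  show ((finrank k ((ERep i d : QRep k c).V j) : ℕ) : ℤ) = _
  rw [finrank_ERep]
  split <;> simp

lemma eulerF_ERep (i : I) (m n : ℕ) :
    eulerF c (dimv (ERep i m : QRep k c)) (dimv (ERep i n : QRep k c))
      = (1 - (c i i : ℤ)) * m * n := by
  rw [eulerF]
  have h1 : ∑ j, (1 - (c j j : ℤ)) * (dimv (ERep i m : QRep k c) j)
      * (dimv (ERep i n : QRep k c) j) = (1 - (c i i : ℤ)) * m * n := by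
    rw [Finset.sum_eq_single i]
    · rw [dimv_ERep_cast, dimv_ERep_cast]; simp
    · intro b _ hb; rw [dimv_ERep_cast, dimv_ERep_cast]; simp [hb]
    · intro h; exact absurd (Finset.mem_univ i) h
  have h2 : ∑ j, ∑ j', (if j = j' then 0 else (c j j' : ℤ))
      * (dimv (ERep i m : QRep k c) j) * (dimv (ERep i n : QRep k c) j') = 0 := by
    apply Finset.sum_eq_zero; intro j _
    apply Finset.sum_eq_zero; intro j' _
    rw [dimv_ERep_cast, dimv_ERep_cast]
    rcases eq_or_ne j i with rfl | hj
    · rcases eq_or_ne j' j with rfl | hj'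
      · simp
      · simp [hj']
    · simp [hj]
  rw [h1, h2, sub_zero]

lemma card_lequiv {V : Type} [AddCommGroup V] [Module k V] [FiniteDimensional k V] :
    Nat.card (V ≃ₗ[k] V)
      = ∏ t ∈ Finset.range (finrank k V),
          (Fintype.card k ^ finrank k V - Fintype.card k ^ t) := by
  set d := finrank k V with hd
  obtain ⟨e⟩ : Nonempty (V ≃ₗ[k] (Fin d → k)) :=
    FiniteDimensional.nonempty_linearEquiv_of_finrank_eq
      (by simp [Module.finrank_fintype_fun_eq_card]; exact hd.symm)
  have E : (V ≃ₗ[k] V) ≃ ((Fin d → k) ≃ₗ[k] (Fin d → k)) :=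
    { toFun := fun f => (e.symm.trans f).trans e
      invFun := fun g => (e.trans g).trans e.symm
      left_inv := fun f => by ext x; simp
      right_inv := fun g => by ext x; simp }
  rw [Nat.card_congr E,
    Nat.card_congr ((Matrix.GeneralLinearGroup.toLin.trans
      (LinearMap.GeneralLinearGroup.generalLinearEquiv k (Fin d → k))).toEquiv).symm,
    Matrix.card_GL_field,
    Fin.prod_univ_eq_prod_range
      (fun t => Fintype.card k ^ d - Fintype.card k ^ t) d]

lemma autNum_ERep (i : I) (d : ℕ) :
    autNum (ERep i d : QRep k c)
      = ∏ t ∈ Finset.range d, (Fintype.card k ^ d - Fintype.card k ^ t) := by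
  rw [autNum]
  have h1 : ∀ e : ∀ j, (ERep i d : QRep k c).V j ≃ₗ[k] (ERep i d : QRep k c).V j,
      ∀ a b ar w, e b ((ERep i d : QRep k c).x a b ar w)
        = (ERep i d : QRep k c).x a b ar (e a w) := by
    intro e a b ar w
    show e b ((0 : (ERep i d : QRep k c).V a →ₗ[k] (ERep i d : QRep k c).V b) w)
        = (0 : (ERep i d : QRep k c).V a →ₗ[k] (ERep i d : QRep k c).V b) (e a w)
    simp
  rw [Nat.card_congr (Equiv.subtypeUnivEquiv h1), Nat.card_pi]
  have h2 : ∀ j, Nat.card ((ERep i d : QRep k c).V j ≃ₗ[k] (ERep i d : QRep k c).V j)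
      = ∏ t ∈ Finset.range (if j = i then d else 0),
          (Fintype.card k ^ (if j = i then d else 0) - Fintype.card k ^ t) := by
    intro j
    rw [card_lequiv, finrank_ERep]
  rw [Finset.prod_congr rfl (fun j _ => h2 j), Finset.prod_eq_single i]
  · simp
  · intro b _ hb; simp [hb]
  · intro h; exact absurd (Finset.mem_univ i) h

lemma li_codRestrict {V : Type} [AddCommGroup V] [Module k V] {W : Submodule k V}
    {n : ℕ} (t : Fin n → W) :
    LinearIndependent k (fun j => (t j : V)) ↔ LinearIndependent k t := by
  have h : (fun j => (t j : V)) = W.subtype ∘ t := rfl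
  rw [h, W.subtype.linearIndependent_iff (Submodule.ker_subtype W)]

lemma nat_card_sigma {β : Type} [Fintype β] (f : β → Type) [∀ b, Finite (f b)] :
    Nat.card (Σ b, f b) = ∑ b, Nat.card (f b) := by
  haveI : ∀ b, Fintype (f b) := fun b => Fintype.ofFinite _
  simp [Nat.card_eq_fintype_card, Fintype.card_sigma]

lemma card_grassmannian {V : Type} [AddCommGroup V] [Module k V] [FiniteDimensional k V]
    {n : ℕ} (hn : n ≤ finrank k V) :
    Nat.card {W : Submodule k V // finrank k W = n}
        * ∏ t ∈ Finset.range n, (Fintype.card k ^ n - Fintype.card k ^ t)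
      = ∏ t ∈ Finset.range n, (Fintype.card k ^ finrank k V - Fintype.card k ^ t) := by
  classical
  haveI : Finite V := Module.finite_of_finite k
  haveI : Finite (Submodule k V) :=
    Finite.of_injective (fun W => (W : Set V)) SetLike.coe_injective
  haveI : Fintype {W : Submodule k V // finrank k W = n} := Fintype.ofFinite _
  set π : {s : Fin n → V // LinearIndependent k s} → {W : Submodule k V // finrank k W = n} :=
    fun s => ⟨Submodule.span k (Set.range s.1), by
      rw [finrank_span_eq_card s.2, Fintype.card_fin]⟩ with hπ
  have fib : ∀ W : {W : Submodule k V // finrank k W = n},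
      Nat.card {s // π s = W}
        = ∏ t ∈ Finset.range n, (Fintype.card k ^ n - Fintype.card k ^ t) := by
    intro W
    have EW : {s // π s = W} ≃ {t : Fin n → W.1 // LinearIndependent k t} :=
      { toFun := fun s =>
          ⟨fun j => ⟨s.1.1 j, by
              have hsp : Submodule.span k (Set.range s.1.1) = W.1 := congrArg Subtype.val s.2
              exact hsp ▸ Submodule.subset_span (Set.mem_range_self j)⟩,
            (li_codRestrict _).mp s.1.2⟩
        invFun := fun t =>
          ⟨⟨fun j => (t.1 j : V), (li_codRestrict t.1).mpr t.2⟩, by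
            apply Subtype.ext
            show Submodule.span k (Set.range fun j => (t.1 j : V)) = W.1
            apply Submodule.eq_of_le_of_finrank_le
            · rw [Submodule.span_le]
              exact Set.range_subset_iff.mpr (fun j => (t.1 j).2)
            · rw [W.2, finrank_span_eq_card ((li_codRestrict t.1).mpr t.2), Fintype.card_fin]⟩
        left_inv := fun s => by
          apply Subtype.ext; apply Subtype.ext; funext j; rfl
        right_inv := fun t => by
          apply Subtype.ext; funext j; apply Subtype.ext; rfl }
    rw [Nat.card_congr EW]
    have hc := card_linearIndependent (K := k) (V := W.1) (k := n) (le_of_eq W.2.symm)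
    rw [hc, Fin.prod_univ_eq_prod_range
      (fun t => Fintype.card k ^ finrank k W.1 - Fintype.card k ^ t) n, W.2]
  have total : Nat.card {s : Fin n → V // LinearIndependent k s}
      = Nat.card {W : Submodule k V // finrank k W = n}
        * ∏ t ∈ Finset.range n, (Fintype.card k ^ n - Fintype.card k ^ t) := by
    rw [← Nat.card_congr (Equiv.sigmaFiberEquiv π), nat_card_sigma,
      Finset.sum_congr rfl (fun W _ => fib W), Finset.sum_const, Finset.card_univ,
      Nat.card_eq_fintype_card, smul_eq_mul]
  rw [← total, card_linearIndependent (K := k) (V := V) (k := n) hn,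
    Fin.prod_univ_eq_prod_range
      (fun t => Fintype.card k ^ finrank k V - Fintype.card k ^ t) n]

lemma toRep_x_zero {L : QRep k c} (hL : ∀ a b e, L.x a b e = 0) (X : QSubRep L) :
    ∀ a b e, X.toRep.x a b e = 0 := by
  intro a b e
  have h : X.toRep.x a b e = (L.x a b e).restrict (X.stable a b e) := rfl
  rw [h]
  apply LinearMap.ext; intro w
  rw [LinearMap.restrict_apply]
  apply Subtype.ext
  simp [hL]
  rfl

lemma quotRep_x_zero {L : QRep k c} (hL : ∀ a b e, L.x a b e = 0) (X : QSubRep L) :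
    ∀ a b e, X.quotRep.x a b e = 0 := by
  intro a b e
  have h : X.quotRep.x a b e
      = Submodule.mapQ (X.W a) (X.W b) (L.x a b e) (fun w hw => X.stable a b e w hw) := rfl
  rw [h]
  refine Submodule.linearMap_qext _ ?_
  apply LinearMap.ext; intro w
  simp [Submodule.mapQ_apply, hL]
  rfl

/-- The family of submodules concentrated at `i`. -/
def subAt (L : QRep k c) (i : I) (W : Submodule k (L.V i)) : ∀ j, Submodule k (L.V j) :=
  fun j => if h : j = i then h ▸ W else ⊥

lemma subAt_self (L : QRep k c) (i : I) (W : Submodule k (L.V i)) : subAt L i W i = W := by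
  simp [subAt]

lemma subAt_ne (L : QRep k c) (i : I) (W : Submodule k (L.V i)) {j : I} (hj : j ≠ i) :
    subAt L i W j = ⊥ := by
  simp [subAt, hj]

lemma qsubrep_ext {L : QRep k c} {A B : QSubRep L} (h : A.W = B.W) : A = B := by
  cases A; cases B
  simp only at h
  subst h
  rfl

lemma ERep_V_subsingleton (i : I) (l : ℕ) {j : I} (hj : j ≠ i) :
    Subsingleton ((ERep i l : QRep k c).V j) := by
  show Subsingleton (Fin (if j = i then l else 0) → k)
  haveI : IsEmpty (Fin (if j = i then l else 0)) := by rw [if_neg hj]; infer_instance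
  infer_instance

lemma hallNum_E (i : I) (m n : ℕ) :
    hallNum (ERep i m : QRep k c) (ERep i n) (ERep i (m + n))
      = Nat.card {W : Submodule k ((ERep i (m + n) : QRep k c).V i) // finrank k W = n} := by
  set L := (ERep i (m + n) : QRep k c) with hLdef
  have hLx : ∀ a b e, L.x a b e = 0 := ERep_x i (m + n)
  have hfra : finrank k (L.V i) = m + n := by
    simpa using finrank_ERep (c := c) i (m + n) i
  have stab : ∀ (Wf : ∀ j, Submodule k (L.V j)), ∀ a b e, ∀ w ∈ Wf a, L.x a b e w ∈ Wf b := by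
    intro Wf a b e w _
    rw [hLx]
    simpa using (Wf b).zero_mem
  have fwd : ∀ X : QSubRep L, QRepIso X.toRep (ERep i n) → finrank k (X.W i) = n := by
    intro X hX
    have h := finrank_eq_of_qiso hX i
    rw [finrank_ERep] at h
    simp at h; exact h
  have bwd : ∀ W : Submodule k (L.V i), finrank k W = n →
      QRepIso (QSubRep.toRep ⟨subAt L i W, stab _⟩) (ERep i n) ∧
      QRepIso (QSubRep.quotRep ⟨subAt L i W, stab _⟩) (ERep i m) := by
    intro W hW
    constructor
    · apply qiso_of_zero (toRep_x_zero hLx _) (ERep_x i n)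
      intro j
      rw [finrank_ERep]
      show finrank k (subAt L i W j) = _
      rcases eq_or_ne j i with rfl | hj
      · rw [subAt_self]; simp [hW]
      · rw [subAt_ne L i W hj, if_neg hj, finrank_bot]
    · apply qiso_of_zero (quotRep_x_zero hLx _) (ERep_x i m)
      intro j
      rw [finrank_ERep]
      show finrank k (L.V j ⧸ subAt L i W j) = _
      have h1 := Submodule.finrank_quotient_add_finrank (subAt L i W j)
      rcases eq_or_ne j i with rfl | hj
      · rw [subAt_self, hW, hfra] at h1
        rw [subAt_self, if_pos rfl]
        omega
      · rw [if_neg hj]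
        have h0 : finrank k (L.V j) = 0 := by
          simpa [hj] using finrank_ERep (c := c) i (m + n) j
        rw [h0] at h1
        omega
  rw [hallNum]
  apply Nat.card_congr
  refine
    { toFun := fun X => ⟨X.1.W i, fwd X.1 X.2.1⟩
      invFun := fun W => ⟨⟨subAt L i W.1, stab _⟩, bwd W.1 W.2⟩
      left_inv := ?_
      right_inv := ?_ }
  · intro X
    apply Subtype.ext
    have hW : subAt L i (X.1.W i) = X.1.W := by
      funext j
      rcases eq_or_ne j i with rfl | hj
      · rw [subAt_self]
      · rw [subAt_ne L i _ hj]
        haveI := ERep_V_subsingleton (k := k) (c := c) i (m + n) hj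
        exact ((Submodule.eq_bot_iff _).mpr (fun x _ => Subsingleton.elim x 0)).symm
    exact qsubrep_ext hW
  · intro W
    exact Subtype.ext (subAt_self L i W.1)

end Aux

/-- Comultiplication formula for the classes `[E_{i,l}]`: for a vertex `i` with
`g_i = c i i` loops, `δ([E_{i,l}]) = ∑_{m+n=l} v^{mn(-1-g_i)} [E_{i,m}] ⊗ [E_{i,n}]`,
i.e. the coefficient of `[E_{i,m}] ⊗ [E_{i,n}]` with `m + n = l` is `v^{mn(-1-g_i)}`
and all other coefficients vanish. -/
theorem hall_comult_Eil (v : ℝ) (hv : 0 < v) (hvq : v ^ 2 = Fintype.card k)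
    (i : I) (l : ℕ) :
    (∀ m n : ℕ, m + n = l →
        deltaCoeff v (ERep i m : QRep k c) (ERep i n) (ERep i l)
          = v ^ ((m : ℤ) * n * (-1 - (c i i : ℤ)))) ∧
    (∀ M N : QRep k c,
        ¬(∃ m n : ℕ, m + n = l ∧ QRepIso M (ERep i m) ∧ QRepIso N (ERep i n)) →
        deltaCoeff v M N (ERep i l : QRep k c) = 0) := by
  constructor
  · intro m n hmn
    subst hmn
    have hq1 : 1 < Fintype.card k := Fintype.one_lt_card
    simp only [deltaCoeff]
    rw [eulerF_ERep, hallNum_E, autNum_ERep, autNum_ERep, autNum_ERep]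
    set q := Fintype.card k with hq
    have hA : finrank k ((ERep i (m + n) : QRep k c).V i) = m + n := by
      simpa using finrank_ERep (c := c) i (m + n) i
    have hGR : Nat.card {W : Submodule k ((ERep i (m + n) : QRep k c).V i) // finrank k W = n}
        * ∏ t ∈ Finset.range n, (q ^ n - q ^ t)
        = ∏ t ∈ Finset.range n, (q ^ (m + n) - q ^ t) := by
      have h := card_grassmannian (V := ((ERep i (m + n) : QRep k c).V i)) (n := n)
        (by rw [hA]; omega)
      rwa [hA] at h
    have hfac : ∀ d t, t < d → 0 < q ^ d - q ^ t := fun d t ht =>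
      Nat.sub_pos_of_lt (Nat.pow_lt_pow_right hq1 ht)
    have glpos : ∀ d, 0 < ∏ t ∈ Finset.range d, (q ^ d - q ^ t) := by
      intro d
      exact Finset.prod_pos (fun t ht => hfac d t (Finset.mem_range.mp ht))
    have P1pos : 0 < ∏ t ∈ Finset.range n, (q ^ (m + n) - q ^ t) :=
      Finset.prod_pos (fun t ht => hfac (m + n) t
        (by have := Finset.mem_range.mp ht; omega))
    have split : ∏ t ∈ Finset.range (m + n), (q ^ (m + n) - q ^ t)
        = (∏ t ∈ Finset.range n, (q ^ (m + n) - q ^ t))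
          * (q ^ (n * m) * ∏ t ∈ Finset.range m, (q ^ m - q ^ t)) := by
      have h1 : ∏ t ∈ Finset.range (n + m), (q ^ (m + n) - q ^ t)
          = (∏ t ∈ Finset.range n, (q ^ (m + n) - q ^ t))
            * ∏ t ∈ Finset.range m, (q ^ (m + n) - q ^ (n + t)) :=
        Finset.prod_range_add (fun t => q ^ (m + n) - q ^ t) n m
      have h2 : ∀ t : ℕ, q ^ (m + n) - q ^ (n + t) = q ^ n * (q ^ m - q ^ t) := by
        intro t
        rw [Nat.mul_sub, ← pow_add, ← pow_add, add_comm m n]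
      calc ∏ t ∈ Finset.range (m + n), (q ^ (m + n) - q ^ t)
          = ∏ t ∈ Finset.range (n + m), (q ^ (m + n) - q ^ t) := by
            rw [add_comm m n]
        _ = (∏ t ∈ Finset.range n, (q ^ (m + n) - q ^ t))
            * ∏ t ∈ Finset.range m, (q ^ (m + n) - q ^ (n + t)) := h1
        _ = (∏ t ∈ Finset.range n, (q ^ (m + n) - q ^ t))
            * ∏ t ∈ Finset.range m, (q ^ n * (q ^ m - q ^ t)) := by
            rw [Finset.prod_congr rfl (fun t _ => h2 t)]
        _ = (∏ t ∈ Finset.range n, (q ^ (m + n) - q ^ t))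
            * (q ^ (n * m) * ∏ t ∈ Finset.range m, (q ^ m - q ^ t)) := by
            rw [Finset.prod_mul_distrib, Finset.prod_const, Finset.card_range, ← pow_mul]
    set Gr := Nat.card {W : Submodule k ((ERep i (m + n) : QRep k c).V i) // finrank k W = n}
      with hGrdef
    set glm := ∏ t ∈ Finset.range m, (q ^ m - q ^ t) with hglm
    set gln := ∏ t ∈ Finset.range n, (q ^ n - q ^ t) with hgln
    set gll := ∏ t ∈ Finset.range (m + n), (q ^ (m + n) - q ^ t) with hgll
    have key : gll = Gr * gln * (q ^ (n * m) * glm) := by rw [split, ← hGR]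
    have Grpos : 0 < Gr := by
      rcases Nat.eq_zero_or_pos Gr with h0 | h
      · rw [h0, zero_mul] at hGR
        omega
      · exact h
    have hv0 : v ≠ 0 := hv.ne'
    have hGr0 : (Gr : ℝ) ≠ 0 := Nat.cast_ne_zero.mpr Grpos.ne'
    have hglm0 : (glm : ℝ) ≠ 0 := Nat.cast_ne_zero.mpr (glpos m).ne'
    have hgln0 : (gln : ℝ) ≠ 0 := Nat.cast_ne_zero.mpr (glpos n).ne'
    have hcast : (gll : ℝ) = Gr * gln * (v ^ (2 * (n * m)) * glm) := by
      rw [key]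
      push_cast
      rw [show ((q : ℕ) : ℝ) ^ (n * m) = v ^ (2 * (n * m)) by
        rw [← hvq, ← pow_mul]]
    rw [hcast]
    rw [div_eq_iff (mul_ne_zero (mul_ne_zero hGr0 hgln0)
      (mul_ne_zero (pow_ne_zero _ hv0) hglm0))]
    have hE : ((1 : ℤ) - (c i i)) * m * n
        = ((m : ℤ) * n * (-1 - (c i i : ℤ))) + ((2 * (n * m) : ℕ) : ℤ) := by
      push_cast
      ring
    rw [hE, zpow_add₀ hv0, zpow_natCast]
    ring
  · intro M N hMN
    have h0 : hallNum M N (ERep i l : QRep k c) = 0 := by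
      rw [hallNum]
      by_contra hne
      obtain ⟨⟨X, hXN, hXM⟩⟩ := (Nat.card_ne_zero.mp hne).1
      have hLx := ERep_x (k := k) (c := c) i l
      have hfr : finrank k ((ERep i l : QRep k c).V i) = l := by
        simpa using finrank_ERep (c := c) i l i
      have hle : finrank k (X.W i) ≤ l := by
        have h := Submodule.finrank_le (X.W i)
        rwa [hfr] at h
      refine hMN ⟨l - finrank k (X.W i), finrank k (X.W i), by omega, ?_, ?_⟩
      · refine qiso_trans (qiso_symm hXM) ?_
        apply qiso_of_zero (quotRep_x_zero hLx X) (ERep_x i _)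
        intro j
        rw [finrank_ERep]
        show finrank k ((ERep i l : QRep k c).V j ⧸ X.W j) = _
        have h1 := Submodule.finrank_quotient_add_finrank (X.W j)
        rcases eq_or_ne j i with rfl | hj
        · rw [if_pos rfl]
          rw [hfr] at h1
          omega
        · rw [if_neg hj]
          have h2 : finrank k ((ERep i l : QRep k c).V j) = 0 := by
            simpa [hj] using finrank_ERep (c := c) i l j
          rw [h2] at h1
          omega
      · refine qiso_trans (qiso_symm hXN) ?_
        apply qiso_of_zero (toRep_x_zero hLx X) (ERep_x i _)
        intro j
        rw [finrank_ERep]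
        show finrank k (X.W j) = _
        rcases eq_or_ne j i with rfl | hj
        · rw [if_pos rfl]
        · rw [if_neg hj]
          have h2 : finrank k ((ERep i l : QRep k c).V j) = 0 := by
            simpa [hj] using finrank_ERep (c := c) i l j
          have h3 := Submodule.finrank_le (X.W j)
          rw [h2] at h3
          omega
    simp only [deltaCoeff, h0]
    simp
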